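/- Let Δ ∈ (0,1] and x ∈ [0, Δ]. Suppose Y(1), Y(0) are {0,1}-valued with E[Y(1)] − E[Y(0)] = Δ, and d is a {0,1}-valued rule with value V^d satisfying V^d − E[Y(0)] = x. If additionally P(Y(1) < Y(0)) = 0 (no harmed patients), then P(d = 1) ≤ 1 − Δ + x. -/

import Mathlib

open MeasureTheory

theorem stmt_15 {Ω : Type*} [MeasurableSpace Ω] (μ : Measure Ω) [IsProbabilityMeasure μ]
    (Δ x : ℝ) (hΔ0 : 0 < Δ) (hΔ1 : Δ ≤ 1) (hx0 : 0 ≤ x) (hxΔ : x ≤ Δ)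
    (Y1 Y0 d : Ω → ℝ) (hY1m : Measurable Y1) (hY0m : Measurable Y0) (hdm : Measurable d)
    (hY1b : ∀ ω, Y1 ω = 0 ∨ Y1 ω = 1) (hY0b : ∀ ω, Y0 ω = 0 ∨ Y0 ω = 1)
    (hdb : ∀ ω, d ω = 0 ∨ d ω = 1)
    (hATE : (∫ ω, Y1 ω ∂μ) - (∫ ω, Y0 ω ∂μ) = Δ)
    (hgain : (∫ ω, (d ω * Y1 ω + (1 - d ω) * Y0 ω) ∂μ) - (∫ ω, Y0 ω ∂μ) = x)
    (hnoharm : μ {ω | Y1 ω < Y0 ω} = 0) :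
    (μ {ω | d ω = 1}).toReal ≤ 1 - Δ + x := by
  have hb : ∀ f : Ω → ℝ, Measurable f → (∀ ω, f ω = 0 ∨ f ω = 1) → Integrable f μ := by
    intro f hm hf
    refine Integrable.mono' (integrable_const 1) hm.aestronglyMeasurable ?_
    filter_upwards with ω
    rcases hf ω with h | h <;> simp [h]
  have iY1 := hb Y1 hY1m hY1b
  have iY0 := hb Y0 hY0m hY0b
  have id' := hb d hdm hdb
  have ig : Integrable (fun ω => d ω * Y1 ω + (1 - d ω) * Y0 ω) μ := by
    refine hb _ ?_ ?_
    · exact (hdm.mul hY1m).add ((measurable_const.sub hdm).mul hY0m)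
    · intro ω
      rcases hdb ω with h | h <;> rcases hY1b ω with h1 | h1 <;>
        rcases hY0b ω with h0 | h0 <;> simp [h, h1, h0]
  -- μ {d = 1} = ∫ d
  have hset : MeasurableSet {ω | d ω = 1} := hdm (measurableSet_singleton 1)
  have hind : (μ {ω | d ω = 1}).toReal = ∫ ω, d ω ∂μ := by
    rw [show (μ {ω | d ω = 1}).toReal = μ.real {ω | d ω = 1} from rfl, ← integral_indicator_one hset]
    refine integral_congr_ae (Filter.Eventually.of_forall fun ω => ?_)
    rcases hdb ω with h | h <;>
      simp [Set.indicator_apply, Set.mem_setOf_eq, h]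
  have key : (∫ ω, (d ω + Y1 ω) ∂μ) ≤
      ∫ ω, (1 + (d ω * Y1 ω + (1 - d ω) * Y0 ω)) ∂μ := by
    refine integral_mono (id'.add iY1) ((integrable_const 1).add ig) fun ω => ?_
    rcases hdb ω with h | h <;> rcases hY1b ω with h1 | h1 <;>
      rcases hY0b ω with h0 | h0 <;> simp [h, h1, h0]
  rw [integral_add id' iY1, integral_add (integrable_const 1) ig,
    integral_const, (by simp : μ.real Set.univ = 1), smul_eq_mul, mul_one] at key
  rw [hind]
  linarith
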